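/- Suppose a_1,...,a_n and b_1,...,b_n are two solutions in G of an R-nullhomologous system x_i^e = w_i(x_1,...,x_n). Then the normal subgroup N of G generated by the elements a_i·b_i^{-1} satisfies: the class of each a_i·b_i^{-1} in N/[G,N] has order dividing e; in particular N is R-invisible. -/

import Mathlib

open scoped TensorProduct

/-- The set of denominators of (reduced fractional expressions of) elements of `R ⊆ ℚ`. -/
def DR (R : Subring ℚ) : Set ℕ := {d | ∃ q ∈ R, q.den = d}

variable {G H A : Type*} [Group G] [Group H] [Group A]

/-- Evaluation of a monomial over `G` in `n` indeterminates at a tuple of elements of `G`. -/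
noncomputable def evalWord {n : ℕ} (g : Fin n → G) :
    Monoid.Coprod G (FreeGroup (Fin n)) →* G :=
  Monoid.Coprod.lift (MonoidHom.id G) (FreeGroup.lift g)

/-- The projection `G * F → F → F/[F,F]`. -/
noncomputable def toFreeAb (G : Type*) [Group G] (n : ℕ) :
    Monoid.Coprod G (FreeGroup (Fin n)) →* Abelianization (FreeGroup (Fin n)) :=
  Monoid.Coprod.lift 1 Abelianization.of

/-- An `R`-nullhomologous system of equations `xᵢ^e = wᵢ(x₁,…,xₙ)` over `G`. -/
structure NullSys (R : Subring ℚ) (G : Type*) [Group G] where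
  n : ℕ
  e : ℕ
  he : e ∈ DR R
  w : Fin n → Monoid.Coprod G (FreeGroup (Fin n))
  nullh : ∀ i, toFreeAb G n (w i) = 1

/-- A solution of a system of equations over `G`. -/
def NullSys.IsSolution {R : Subring ℚ} (S : NullSys R G) (g : Fin S.n → G) : Prop :=
  ∀ i, (g i) ^ S.e = evalWord g (S.w i)

/-- A group is `R`-closed if every `R`-nullhomologous system over it has a unique solution. -/
def IsRClosed (R : Subring ℚ) (A : Type*) [Group A] : Prop :=
  ∀ S : NullSys R A, ∃! g : Fin S.n → A, S.IsSolution g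

/-- A normal subgroup `N ≤ G` is `R`-invisible if it is normally finitely generated and every
element of `N/[G,N]` has (finite) order lying in `D_R`. -/
def IsRInvisible (R : Subring ℚ) {G : Type*} [Group G] (N : Subgroup G) : Prop :=
  N.Normal ∧
  (∃ s : Finset G, ↑s ⊆ (N : Set G) ∧ Subgroup.normalClosure ↑s = N) ∧
  ∀ x ∈ N, ∃ e ∈ DR R, x ^ e ∈ ⁅(⊤ : Subgroup G), N⁆

open scoped commutatorElement in
lemma mk_mem_center_of_mem (N : Subgroup G) [N.Normal] {x : G} (hx : x ∈ N) :
    QuotientGroup.mk' ⁅(⊤ : Subgroup G), N⁆ x ∈ Subgroup.center (G ⧸ ⁅(⊤ : Subgroup G), N⁆) := by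
  rw [Subgroup.mem_center_iff]
  intro q
  induction q using QuotientGroup.induction_on with
  | _ g =>
    have h : ⁅QuotientGroup.mk' ⁅(⊤ : Subgroup G), N⁆ g,
        QuotientGroup.mk' ⁅(⊤ : Subgroup G), N⁆ x⁆ = 1 := by
      rw [← map_commutatorElement, QuotientGroup.mk'_apply, QuotientGroup.eq_one_iff]
      exact Subgroup.commutator_mem_commutator (Subgroup.mem_top g) hx
    exact commutatorElement_eq_one_iff_mul_comm.mp h

/-- The "twisted evaluation" homomorphism. -/
noncomputable def chi {n : ℕ} (b : Fin n → G) (K : Subgroup G) [K.Normal]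
    (f : Abelianization (FreeGroup (Fin n)) →* Subgroup.center (G ⧸ K)) :
    Monoid.Coprod G (FreeGroup (Fin n)) →* G ⧸ K where
  toFun w := (f (toFreeAb G n w) : G ⧸ K) * (QuotientGroup.mk' K) (evalWord b w)
  map_one' := by simp
  map_mul' x y := by
    have h := Subgroup.mem_center_iff.mp (f (toFreeAb G n y)).2
      ((QuotientGroup.mk' K) (evalWord b x))
    simp only [map_mul, Subgroup.coe_mul, mul_assoc]
    congr 1
    rw [← mul_assoc, ← mul_assoc, h]

lemma chi_apply {n : ℕ} (b : Fin n → G) (K : Subgroup G) [K.Normal]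
    (f : Abelianization (FreeGroup (Fin n)) →* Subgroup.center (G ⧸ K))
    (w : Monoid.Coprod G (FreeGroup (Fin n))) :
    chi b K f w = (f (toFreeAb G n w) : G ⧸ K) * (QuotientGroup.mk' K) (evalWord b w) := rfl

lemma eval_eq_chi {n : ℕ} (a b : Fin n → G) (K : Subgroup G) [K.Normal]
    (f : Abelianization (FreeGroup (Fin n)) →* Subgroup.center (G ⧸ K))
    (hf : ∀ i, (f (Abelianization.of (FreeGroup.of i)) : G ⧸ K)
        = QuotientGroup.mk' K (a i * (b i)⁻¹)) :
    (QuotientGroup.mk' K).comp (evalWord a) = chi b K f := by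
  apply Monoid.Coprod.hom_ext
  · ext g
    simp [chi_apply, evalWord, toFreeAb, Monoid.Coprod.lift_apply_inl]
  · apply FreeGroup.ext_hom
    intro i
    simp [chi_apply, evalWord, toFreeAb, Monoid.Coprod.lift_apply_inr, hf i]

open scoped IsMulCommutative in
lemma key_pow {R : Subring ℚ} (S : NullSys R G) (a b : Fin S.n → G)
    (ha : S.IsSolution a) (hb : S.IsSolution b)
    (N : Subgroup G) [N.Normal]
    (hmem : ∀ i, a i * (b i)⁻¹ ∈ N) (i : Fin S.n) :
    QuotientGroup.mk' ⁅(⊤ : Subgroup G), N⁆ (a i * (b i)⁻¹) ^ S.e = 1 := by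
  set K := ⁅(⊤ : Subgroup G), N⁆ with hK
  set π := QuotientGroup.mk' K with hπ
  have hcent : ∀ j, π (a j * (b j)⁻¹) ∈ Subgroup.center (G ⧸ K) :=
    fun j => mk_mem_center_of_mem N (hmem j)
  set f : Abelianization (FreeGroup (Fin S.n)) →* Subgroup.center (G ⧸ K) :=
    Abelianization.lift (FreeGroup.lift fun j => ⟨π (a j * (b j)⁻¹), hcent j⟩) with hfdef
  have hf : ∀ j, (f (Abelianization.of (FreeGroup.of j)) : G ⧸ K) = π (a j * (b j)⁻¹) := by
    intro j
    rw [hfdef]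
    simp
  have hχ := DFunLike.congr_fun (eval_eq_chi a b K f hf) (S.w i)
  rw [MonoidHom.comp_apply, chi_apply, S.nullh i, map_one, OneMemClass.coe_one, one_mul,
    ← ha i, ← hb i, map_pow, map_pow] at hχ
  -- hχ : π (a i) ^ S.e = π (b i) ^ S.e
  have hcomm : Commute (π (a i * (b i)⁻¹)) (π (b i)) :=
    ((Subgroup.mem_center_iff.mp (hcent i)) (π (b i))).symm
  have e1 : π (a i * (b i)⁻¹) * π (b i) = π (a i) := by
    rw [← map_mul, inv_mul_cancel_right]
  have e2 : π (a i * (b i)⁻¹) ^ S.e * π (b i) ^ S.e = π (b i) ^ S.e := by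
    rw [← hcomm.mul_pow, e1, hχ]
  apply mul_right_cancel (b := π (b i) ^ S.e)
  rw [one_mul]; exact e2

/-- If `a` and `b` are two solutions of an `R`-nullhomologous system over `G`, then in the
normal subgroup `N` normally generated by the elements `aᵢ bᵢ⁻¹`, the class of each `aᵢ bᵢ⁻¹`
in `N/[G,N]` has order dividing `e`; in particular `N` is `R`-invisible. -/
theorem normal_closure_of_solution_differences_isRInvisible (R : Subring ℚ)
    {G : Type*} [Group G] (S : NullSys R G) (a b : Fin S.n → G)
    (ha : S.IsSolution a) (hb : S.IsSolution b)
    (N : Subgroup G) (hN : N = Subgroup.normalClosure (Set.range fun i => a i * (b i)⁻¹)) :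
    (∀ i, (a i * (b i)⁻¹) ^ S.e ∈ ⁅(⊤ : Subgroup G), N⁆) ∧ IsRInvisible R N := by
  subst hN
  set N := Subgroup.normalClosure (Set.range fun i => a i * (b i)⁻¹) with hNdef
  set K := ⁅(⊤ : Subgroup G), N⁆ with hK
  set π := QuotientGroup.mk' K with hπ
  have hmem : ∀ i, a i * (b i)⁻¹ ∈ N :=
    fun i => Subgroup.subset_normalClosure ⟨i, rfl⟩
  have hkey := key_pow S a b ha hb N hmem
  have key : ∀ i, (a i * (b i)⁻¹) ^ S.e ∈ K := by
    intro i
    rw [← QuotientGroup.eq_one_iff]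
    show π ((a i * (b i)⁻¹) ^ S.e) = 1
    rw [map_pow, hkey i]
  refine ⟨key, inferInstance, ?_, ?_⟩
  · classical
    refine ⟨Finset.image (fun i => a i * (b i)⁻¹) Finset.univ, ?_, ?_⟩
    · intro x hx
      simp only [Finset.coe_image, Finset.coe_univ, Set.image_univ] at hx
      exact Subgroup.subset_normalClosure hx
    · rw [Finset.coe_image, Finset.coe_univ, Set.image_univ]
  · intro x hx
    refine ⟨S.e, S.he, ?_⟩
    -- the subgroup of central elements of exponent dividing e
    let T : Subgroup (G ⧸ K) :=
    { carrier := {q | q ∈ Subgroup.center (G ⧸ K) ∧ q ^ S.e = 1}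
      one_mem' := ⟨Subgroup.one_mem _, one_pow _⟩
      mul_mem' := by
        rintro p q ⟨hp, hp'⟩ ⟨hq, hq'⟩
        refine ⟨mul_mem hp hq, ?_⟩
        have hc : Commute p q := ((Subgroup.mem_center_iff.mp hp) q).symm
        rw [hc.mul_pow, hp', hq', one_mul]
      inv_mem' := by
        rintro p ⟨hp, hp'⟩
        exact ⟨inv_mem hp, by rw [inv_pow, hp', inv_one]⟩ }
    have hTnormal : T.Normal := by
      constructor
      intro q hq g
      have h : g * q * g⁻¹ = q := by
        rw [Subgroup.mem_center_iff.mp hq.1 g, mul_inv_cancel_right]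
      rw [h]; exact hq
    haveI := hTnormal
    haveI : (T.comap π).Normal := Subgroup.Normal.comap hTnormal π
    have hNT : N ≤ T.comap π := by
      apply Subgroup.normalClosure_le_normal
      rintro _ ⟨i, rfl⟩
      exact ⟨mk_mem_center_of_mem N (hmem i), hkey i⟩
    have hxT : π x ∈ T := hNT hx
    rw [← QuotientGroup.eq_one_iff]
    show π (x ^ S.e) = 1
    rw [map_pow]
    exact hxT.2
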